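/- Let Π be an orthogonal projector (Π Hermitian with Π² = Π) and ρ a sub-normalized state with tr(Πρ) < 1. Define ρ̃ := (1−Π)ρ(1−Π)/(1 − tr(Πρ)). Then ρ̃ is positive semidefinite with tr ρ̃ ≤ 1, and the purified distance satisfies P(ρ, ρ̃) = √(tr(Πρ)). Moreover tr ρ̃ = 1 if and only if tr ρ = 1. -/

import Mathlib

open scoped Classical ComplexOrder Kronecker
open Matrix

noncomputable section

variable {n : Type*} [Fintype n] [DecidableEq n]

/-- Real part of the trace. -/
def rtr (A : Matrix n n ℂ) : ℝ := (A.trace).re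

/-- Löwner order: `loewnerLE A B` iff `B - A` is positive semidefinite. -/
def loewnerLE (A B : Matrix n n ℂ) : Prop := (B - A).PosSemidef

/-- The old Mathlib `Matrix.PosSemidef.sqrt` (removed), spelled out with its old definition. -/
def psdSqrtOld {A : Matrix n n ℂ} (hA : A.PosSemidef) : Matrix n n ℂ :=
  (hA.1.eigenvectorUnitary : Matrix n n ℂ) *
    Matrix.diagonal ((↑) ∘ (fun x : ℝ => Real.sqrt x) ∘ hA.1.eigenvalues) *
    (star hA.1.eigenvectorUnitary : Matrix n n ℂ)

/-- Positive semidefinite square root of a PSD matrix (junk value `0` otherwise). -/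
def msqrt (A : Matrix n n ℂ) : Matrix n n ℂ :=
  if h : A.PosSemidef then psdSqrtOld h else 0

/-- Trace norm `‖A‖₁ = tr √(Aᴴ A)`. -/
def traceNorm (A : Matrix n n ℂ) : ℝ :=
  rtr (psdSqrtOld (Matrix.posSemidef_conjTranspose_mul_self A))

/-- Generalized fidelity for sub-normalized states. -/
def genFid (ρ σ : Matrix n n ℂ) : ℝ :=
  (traceNorm (msqrt ρ * msqrt σ) + Real.sqrt ((1 - rtr ρ) * (1 - rtr σ))) ^ 2

/-- Purified distance. -/
def purDist (ρ σ : Matrix n n ℂ) : ℝ := Real.sqrt (1 - genFid ρ σ)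

/-- Trace distance. -/
def traceDist (ρ σ : Matrix n n ℂ) : ℝ := traceNorm (ρ - σ) / 2

/-- Max-divergence `D_max(ρ‖σ) = inf {λ : ρ ≤ 2^λ σ}` (Löwner order). -/
def Dmax (ρ σ : Matrix n n ℂ) : ℝ :=
  sInf {lam : ℝ | loewnerLE ρ (((2 : ℝ) ^ lam) • σ)}

/-- Smoothed max-divergence with purified-distance smoothing over sub-normalized states. -/
def DmaxSmoothP (ε : ℝ) (ρ σ : Matrix n n ℂ) : ℝ :=
  sInf {d : ℝ | ∃ ρ' : Matrix n n ℂ,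
    ρ'.PosSemidef ∧ rtr ρ' ≤ 1 ∧ purDist ρ ρ' ≤ ε ∧ d = Dmax ρ' σ}

/-- Hypothesis testing divergence
`D_h^ε(ρ‖σ) = -log sup {tr (Λ σ) : 0 ≤ Λ ≤ 1, tr (Λ ρ) ≥ 1 - ε}`. -/
def Dh (ε : ℝ) (ρ σ : Matrix n n ℂ) : ℝ :=
  - Real.logb 2 (sSup {x : ℝ | ∃ L : Matrix n n ℂ,
      L.PosSemidef ∧ loewnerLE L 1 ∧ 1 - ε ≤ rtr (L * ρ) ∧ x = rtr (L * σ)})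

/-- Real power of a Hermitian matrix, defined spectrally (junk value `0` if not Hermitian). -/
def hpow (A : Matrix n n ℂ) (t : ℝ) : Matrix n n ℂ :=
  if h : A.IsHermitian then
    (h.eigenvectorUnitary : Matrix n n ℂ) *
      Matrix.diagonal (fun i => ((h.eigenvalues i ^ t : ℝ) : ℂ)) *
      (star (h.eigenvectorUnitary : Matrix n n ℂ))
  else 0

/-- Sandwiched Rényi divergence of order `α`. -/
def sandwichedRenyi (α : ℝ) (ρ σ : Matrix n n ℂ) : ℝ :=
  (1 / (α - 1)) * Real.logb 2
    (rtr (hpow (hpow σ ((1 - α) / (2 * α)) * ρ * hpow σ ((1 - α) / (2 * α))) α) / rtr ρ)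

/-- Marginal (partial trace) on the first factor. -/
def margA {A B : Type*} [Fintype A] [Fintype B] (ρ : Matrix (A × B) (A × B) ℂ) :
    Matrix A A ℂ :=
  Matrix.of fun a a' => ∑ b : B, ρ (a, b) (a', b)

/-- Marginal (partial trace) on the second factor. -/
def margB {A B : Type*} [Fintype A] [Fintype B] (ρ : Matrix (A × B) (A × B) ℂ) :
    Matrix B B ℂ :=
  Matrix.of fun b b' => ∑ a : A, ρ (a, b) (a, b')

end

section Aux

variable {n : Type*} [Fintype n] [DecidableEq n]

lemma psd_rsmul {A : Matrix n n ℂ} (hA : A.PosSemidef) {r : ℝ} (hr : 0 ≤ r) :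
    (r • A).PosSemidef := by
  have hc : r • A = (r : ℂ) • A := by
    ext i j; simp [Matrix.smul_apply, Complex.real_smul]
  rw [hc]
  constructor
  · unfold Matrix.IsHermitian
    rw [Matrix.conjTranspose_smul, hA.1.eq]
    simp [Complex.conj_ofReal]
  · intro x
    exact (hA.smul (show (0:ℂ) ≤ r by exact_mod_cast hr)).2 x

lemma rtr_nonneg {A : Matrix n n ℂ} (hA : A.PosSemidef) : 0 ≤ rtr A := by
  have h : ∀ i, 0 ≤ (A i i).re := by
    intro i
    exact (Complex.nonneg_iff.mp (hA.diag_nonneg (i := i))).1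
  simp only [rtr, Matrix.trace, Matrix.diag, Complex.re_sum]
  exact Finset.sum_nonneg fun i _ => h i

lemma rtr_smul (r : ℝ) (A : Matrix n n ℂ) : rtr (r • A) = r * rtr A := by
  simp [rtr, Matrix.trace_smul, Complex.smul_re]

open scoped MatrixOrder
lemma psdSqrtOld_eq {A : Matrix n n ℂ} (hA : A.PosSemidef) : psdSqrtOld hA = CFC.sqrt A := by
  rw [CFC.sqrt_eq_cfc, cfc_nnreal_eq_real _ A, hA.1.cfc_eq]
  simp only [IsHermitian.cfc, psdSqrtOld, Real.coe_sqrt, Real.coe_toNNReal', Unitary.conjStarAlgAut_apply]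
  congr 3
  funext i
  simp [max_eq_left (hA.eigenvalues_nonneg i)]
lemma psdSqrtOld_psd {A : Matrix n n ℂ} (hA : A.PosSemidef) : (psdSqrtOld hA).PosSemidef := by
  rw [psdSqrtOld_eq]; exact (CFC.sqrt_nonneg A).posSemidef
lemma psdSqrtOld_mul_self {A : Matrix n n ℂ} (hA : A.PosSemidef) :
    psdSqrtOld hA * psdSqrtOld hA = A := by
  rw [psdSqrtOld_eq]; exact CFC.sqrt_mul_sqrt_self A hA.nonneg
lemma eq_psdSqrtOld_of_sq_eq {A B : Matrix n n ℂ} (hB : B.PosSemidef) (hA : A.PosSemidef)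
    (h : B ^ 2 = A) : B = psdSqrtOld hA := by
  rw [psdSqrtOld_eq]; exact (CFC.sqrt_unique (by rw [← sq]; exact h) hB.nonneg).symm
end Aux

/-- Gentle measurement for the purified distance. -/
theorem gentle_measurement_purified_distance
    {n : Type*} [Fintype n] [DecidableEq n] [Nonempty n]
    (Pr ρ : Matrix n n ℂ) (hPr : Pr.IsHermitian) (hPr2 : Pr * Pr = Pr)
    (hρ : ρ.PosSemidef) (hρ0 : 0 < rtr ρ) (hρ1 : rtr ρ ≤ 1)
    (hlt : rtr (Pr * ρ) < 1)
    (ρ' : Matrix n n ℂ) (hρ' : ρ' = (1 - rtr (Pr * ρ))⁻¹ • ((1 - Pr) * ρ * (1 - Pr))) :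
    ρ'.PosSemidef ∧ rtr ρ' ≤ 1 ∧
      purDist ρ ρ' = Real.sqrt (rtr (Pr * ρ)) ∧
      (rtr ρ' = 1 ↔ rtr ρ = 1) := by
  set t : ℝ := rtr (Pr * ρ) with ht
  set s : ℝ := rtr ρ with hs
  set u : ℝ := 1 - t with hudef
  have hu : 0 < u := by simp only [hudef]; linarith
  have hune : u ≠ 0 := ne_of_gt hu
  set Q : Matrix n n ℂ := 1 - Pr with hQdef
  have hQH : Qᴴ = Q := by
    simp [hQdef, Matrix.conjTranspose_sub, hPr.eq]
  have hQ2 : Q * Q = Q := by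
    simp only [hQdef, Matrix.mul_sub, Matrix.sub_mul, Matrix.one_mul, Matrix.mul_one, hPr2]
    abel
  have hPrQ : Pr * Q = 0 := by
    simp [hQdef, Matrix.mul_sub, hPr2]
  have hQPr : Q * Pr = 0 := by
    simp [hQdef, Matrix.sub_mul, hPr2]
  -- ρ' in terms of Q
  have hρ'Q : ρ' = u⁻¹ • (Q * ρ * Q) := by rw [hρ', hQdef]
  have hQρQ : (Q * ρ * Q).PosSemidef := by
    have h := hρ.mul_mul_conjTranspose_same Q
    rwa [hQH] at h
  have hpsd' : ρ'.PosSemidef := by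
    rw [hρ'Q]; exact psd_rsmul hQρQ (inv_nonneg.mpr hu.le)
  -- trace of ρ'
  have htrQρQ : rtr (Q * ρ * Q) = s - t := by
    have h1 : (Q * ρ * Q).trace = (Q * ρ).trace := by
      rw [Matrix.trace_mul_cycle, hQ2]
    have h2 : (Q * ρ).trace = ρ.trace - (Pr * ρ).trace := by
      simp [hQdef, Matrix.sub_mul, Matrix.trace_sub]
    simp [rtr, h1, h2, Complex.sub_re, hs, ht]
  have htr' : rtr ρ' = u⁻¹ * (s - t) := by
    rw [hρ'Q, rtr_smul, htrQρQ]
  have htr'le : rtr ρ' ≤ 1 := by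
    rw [htr', inv_mul_eq_div, div_le_one hu]
    simp only [hudef]; linarith
  -- square roots
  have hmρ : msqrt ρ = psdSqrtOld hρ := dif_pos hρ
  have hmρ' : msqrt ρ' = psdSqrtOld hpsd' := dif_pos hpsd'
  set T : Matrix n n ℂ := psdSqrtOld hpsd' with hTdef
  have hTpsd : T.PosSemidef := psdSqrtOld_psd hpsd'
  have hTT : T * T = ρ' := psdSqrtOld_mul_self hpsd'
  -- Pr annihilates T
  have hPrρ'Pr : Pr * ρ' * Pr = 0 := by
    rw [hρ'Q, Matrix.mul_smul, Matrix.smul_mul]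
    have : Pr * (Q * ρ * Q) * Pr = (Pr * Q) * ρ * (Q * Pr) := by
      simp only [Matrix.mul_assoc]
    rw [this, hPrQ, hQPr]
    simp
  have hTPr : T * Pr = 0 := by
    apply Matrix.conjTranspose_mul_self_eq_zero.mp
    rw [Matrix.conjTranspose_mul, hTpsd.1.eq, hPr.eq]
    calc Pr * T * (T * Pr) = Pr * (T * T) * Pr := by simp only [Matrix.mul_assoc]
      _ = 0 := by rw [hTT, hPrρ'Pr]
  have hPrT : Pr * T = 0 := by
    have := congrArg Matrix.conjTranspose hTPr
    rwa [Matrix.conjTranspose_mul, hTpsd.1.eq, hPr.eq, Matrix.conjTranspose_zero] at this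
  have hQT : Q * T = T := by
    rw [hQdef, Matrix.sub_mul, Matrix.one_mul, hPrT, sub_zero]
  have hTQ : T * Q = T := by
    rw [hQdef, Matrix.mul_sub, Matrix.mul_one, hTPr, sub_zero]
  -- the key matrix identity
  have hQρQ' : Q * ρ * Q = u • ρ' := by
    rw [hρ'Q, smul_smul, mul_inv_cancel₀ hune, one_smul]
  have hTρT : T * ρ * T = u • (ρ' * ρ') := by
    calc T * ρ * T = (T * Q) * ρ * (Q * T) := by rw [hTQ, hQT]
      _ = T * (Q * ρ * Q) * T := by simp only [Matrix.mul_assoc]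
      _ = T * (u • ρ') * T := by rw [hQρQ']
      _ = u • (T * ρ' * T) := by rw [Matrix.mul_smul, Matrix.smul_mul]
      _ = u • ((T * T) * (T * T)) := by rw [← hTT]; simp only [Matrix.mul_assoc]
      _ = u • (ρ' * ρ') := by rw [hTT]
  -- compute the trace norm
  set A : Matrix n n ℂ := msqrt ρ * msqrt ρ' with hAdef
  have hAA : Aᴴ * A = T * ρ * T := by
    rw [hAdef, hmρ, hmρ', Matrix.conjTranspose_mul, hTpsd.1.eq,
      (psdSqrtOld_psd hρ).1.eq]
    calc T * psdSqrtOld hρ * (psdSqrtOld hρ * T) = T * (psdSqrtOld hρ * psdSqrtOld hρ) * T := by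
          simp only [Matrix.mul_assoc]
      _ = T * ρ * T := by rw [psdSqrtOld_mul_self hρ]
  set X : Matrix n n ℂ := Real.sqrt u • ρ' with hXdef
  have hXpsd : X.PosSemidef := psd_rsmul hpsd' (Real.sqrt_nonneg u)
  have hXsq : X ^ 2 = Aᴴ * A := by
    rw [hXdef, smul_pow, pow_two, pow_two, Real.mul_self_sqrt hu.le, hAA, hTρT]
  have hXsqrt : X = psdSqrtOld (Matrix.posSemidef_conjTranspose_mul_self A) :=
    eq_psdSqrtOld_of_sq_eq hXpsd _ hXsq
  have htn : traceNorm A = Real.sqrt u * (u⁻¹ * (s - t)) := by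
    rw [traceNorm, ← hXsqrt, hXdef, rtr_smul, htr']
  -- real arithmetic
  have hsqu : Real.sqrt u * Real.sqrt u = u := Real.mul_self_sqrt hu.le
  have hsqune : Real.sqrt u ≠ 0 := by
    positivity
  have htn' : traceNorm A = (Real.sqrt u)⁻¹ * (s - t) := by
    rw [htn, ← mul_assoc]
    congr 1
    field_simp
    exact Real.sq_sqrt hu.le
  have hfid : genFid ρ ρ' = u := by
    rw [genFid, ← hAdef, htn', ← hs]
    have h1 : 1 - rtr ρ' = u⁻¹ * (1 - s) := by
      rw [htr']; field_simp; simp only [hudef]; ring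
    have h2 : (1 - s) * (1 - rtr ρ') = (1 - s) ^ 2 * u⁻¹ := by
      rw [h1]; ring
    have h3 : Real.sqrt ((1 - s) * (1 - rtr ρ')) = (1 - s) * (Real.sqrt u)⁻¹ := by
      rw [h2, Real.sqrt_mul (sq_nonneg _), Real.sqrt_inv,
        Real.sqrt_sq (by linarith : (0:ℝ) ≤ 1 - s)]
    rw [h3]
    have h4 : (Real.sqrt u)⁻¹ * (s - t) + (1 - s) * (Real.sqrt u)⁻¹ = Real.sqrt u := by
      have : (Real.sqrt u)⁻¹ * (s - t) + (1 - s) * (Real.sqrt u)⁻¹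
          = (Real.sqrt u)⁻¹ * u := by rw [hudef]; ring
      rw [this, inv_mul_eq_div, div_eq_iff hsqune]
      exact hsqu.symm
    rw [h4, sq, hsqu]
  have hpd : purDist ρ ρ' = Real.sqrt t := by
    rw [purDist, hfid]
    congr 1
    simp only [hudef]; ring
  refine ⟨hpsd', htr'le, hpd, ?_⟩
  rw [htr', inv_mul_eq_div, div_eq_one_iff_eq hune]
  constructor
  · intro h; have h2 := hudef; linarith
  · intro h; have h2 := hudef; linarith
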